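/- For every infinite colouring Δ : ℕ^(2) → ℕ, one has 3 ∈ G_Δ: there exists a subset X ⊆ ℕ that is exactly 3-coloured. -/

import Mathlib

/-- The colour of the unordered edge `{x, y}` (only values on distinct pairs matter). -/
def edgeCol (Δ : ℕ → ℕ → ℕ) (x y : ℕ) : ℕ := Δ (min x y) (max x y)

/-- `colourSet Δ X` is the set of colours attained by `Δ` on edges with both endpoints in `X`. -/
def colourSet (Δ : ℕ → ℕ → ℕ) (X : Set ℕ) : Set ℕ :=
  {c | ∃ x ∈ X, ∃ y ∈ X, x ≠ y ∧ edgeCol Δ x y = c}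

/-- `G_Δ`: the set of `m ≥ 1` for which some (finite or infinite) `X ⊆ ℕ` is
exactly `m`-coloured. -/
def GSet (Δ : ℕ → ℕ → ℕ) : Set ℕ :=
  {m | 1 ≤ m ∧ ∃ X : Set ℕ, (colourSet Δ X).Finite ∧ (colourSet Δ X).ncard = m}

lemma edgeCol_symm (Δ : ℕ → ℕ → ℕ) (x y : ℕ) : edgeCol Δ x y = edgeCol Δ y x := by
  simp [edgeCol, min_comm, max_comm]

lemma colourSet_mono (Δ : ℕ → ℕ → ℕ) {X Y : Set ℕ} (h : X ⊆ Y) :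
    colourSet Δ X ⊆ colourSet Δ Y := by
  rintro c ⟨x, hx, y, hy, hxy, hc⟩
  exact ⟨x, h hx, y, h hy, hxy, hc⟩

lemma colourSet_finite (Δ : ℕ → ℕ → ℕ) (X : Finset ℕ) : (colourSet Δ ↑X).Finite := by
  apply Set.Finite.subset (Set.Finite.image2 (edgeCol Δ) X.finite_toSet X.finite_toSet)
  rintro c ⟨x, hx, y, hy, _, hc⟩
  exact Set.mem_image2.mpr ⟨x, hx, y, hy, hc⟩

lemma key (Δ : ℕ → ℕ → ℕ) : ∀ n (X : Finset ℕ), X.card = n →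
    3 ≤ (colourSet Δ ↑X).ncard →
    ∃ Y : Set ℕ, (colourSet Δ Y).Finite ∧ (colourSet Δ Y).ncard = 3 := by
  intro n
  induction n using Nat.strong_induction_on with
  | _ n IH =>
    intro X hcard h3
    rcases eq_or_lt_of_le h3 with heq | h4
    · exact ⟨↑X, colourSet_finite Δ X, heq.symm⟩
    by_cases hv : ∃ v ∈ X, 3 ≤ (colourSet Δ ↑(X.erase v)).ncard
    · obtain ⟨v, hvX, hv3⟩ := hv
      exact IH (X.erase v).card (hcard ▸ Finset.card_erase_lt_of_mem hvX)
        (X.erase v) rfl hv3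
    push_neg at hv
    -- pick a vertex v of X
    have hne : (colourSet Δ (↑X : Set ℕ)).Nonempty := by
      apply Set.nonempty_of_ncard_ne_zero; omega
    obtain ⟨c0, x0, hx0, y0, hy0, hxy0, hc0⟩ := hne
    set v := x0 with hv0
    have hvX : v ∈ X := hx0
    set A := colourSet Δ (↑(X.erase v) : Set ℕ) with hA
    have hA2 : A.ncard ≤ 2 := by
      have h := hv v hvX
      rw [← hA] at h
      omega
    set D := colourSet Δ (↑X : Set ℕ) \ A with hD
    have hDfin : D.Finite := (colourSet_finite Δ X).diff (t := A)
    have hcov : colourSet Δ (↑X : Set ℕ) ⊆ A ∪ D := by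
      intro c hc
      by_cases h : c ∈ A
      · exact Or.inl h
      · exact Or.inr ⟨hc, h⟩
    have hAfin : A.Finite := colourSet_finite Δ _
    have hD2 : 2 ≤ D.ncard := by
      have h1 : (colourSet Δ (↑X : Set ℕ)).ncard ≤ (A ∪ D).ncard :=
        Set.ncard_le_ncard hcov (hAfin.union hDfin)
      have h2 := Set.ncard_union_le A D
      omega
    obtain ⟨c, c', hcD, hc'D, hcc'⟩ := (Set.one_lt_ncard_iff hDfin).mp (by omega)
    have extract : ∀ d ∈ D, ∃ a ∈ X, a ≠ v ∧ edgeCol Δ v a = d := by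
      rintro d ⟨⟨x, hx, y, hy, hxy, hd⟩, hdA⟩
      by_cases hxv : x = v
      · subst hxv
        exact ⟨y, hy, fun h => hxy h.symm, hd⟩
      by_cases hyv : y = v
      · subst hyv
        exact ⟨x, hx, hxv, (edgeCol_symm Δ y x) ▸ hd⟩
      · exfalso
        exact hdA ⟨x, Finset.mem_coe.mpr (Finset.mem_erase.mpr ⟨hxv, hx⟩),
          y, Finset.mem_coe.mpr (Finset.mem_erase.mpr ⟨hyv, hy⟩), hxy, hd⟩
    obtain ⟨a, haX, hav, hca⟩ := extract c hcD
    obtain ⟨b, hbX, hbv, hcb⟩ := extract c' hc'D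
    have hab : a ≠ b := by
      rintro rfl
      exact hcc' (hca ▸ hcb)
    set cab := edgeCol Δ a b with hcab
    have hcabA : cab ∈ A := ⟨a, Finset.mem_coe.mpr (Finset.mem_erase.mpr ⟨hav, haX⟩),
      b, Finset.mem_coe.mpr (Finset.mem_erase.mpr ⟨hbv, hbX⟩), hab, rfl⟩
    have hccab : c ≠ cab := fun h => hcD.2 (h ▸ hcabA)
    have hc'cab : c' ≠ cab := fun h => hc'D.2 (h ▸ hcabA)
    refine ⟨{v, a, b}, ?_⟩
    have hEq : colourSet Δ {v, a, b} = {c, c', cab} := by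
      apply Set.Subset.antisymm
      · rintro d ⟨x, hx, y, hy, hxy, hd⟩
        simp only [Set.mem_insert_iff, Set.mem_singleton_iff] at hx hy ⊢
        rcases hx with rfl | rfl | rfl <;> rcases hy with rfl | rfl | rfl <;> subst hd <;>
          first
            | exact absurd rfl hxy
            | exact Or.inl hca
            | exact Or.inl ((edgeCol_symm Δ _ _).trans hca)
            | exact Or.inr (Or.inl hcb)
            | exact Or.inr (Or.inl ((edgeCol_symm Δ _ _).trans hcb))
            | exact Or.inr (Or.inr rfl)
            | exact Or.inr (Or.inr (edgeCol_symm Δ _ _))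
      · intro d hd
        simp only [Set.mem_insert_iff, Set.mem_singleton_iff] at hd
        rcases hd with rfl | rfl | rfl
        · exact ⟨v, by simp, a, by simp, fun h => hav h.symm, hca⟩
        · exact ⟨v, by simp, b, by simp, fun h => hbv h.symm, hcb⟩
        · exact ⟨a, by simp, b, by simp, hab, rfl⟩
    rw [hEq]
    refine ⟨Set.toFinite _, ?_⟩
    exact Set.ncard_eq_three.mpr ⟨c, c', cab, hcc', hccab, hc'cab, rfl⟩

/-- For every infinite colouring `Δ : ℕ^(2) → ℕ`, we have `3 ∈ G_Δ`:
some `X ⊆ ℕ` is exactly 3-coloured. -/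
theorem three_mem_GSet (Δ : ℕ → ℕ → ℕ) (hΔ : (colourSet Δ Set.univ).Infinite) :
    3 ∈ GSet Δ := by
  obtain ⟨c1, hc1⟩ := hΔ.nonempty
  obtain ⟨c2, hc2, hc21⟩ : ∃ c ∈ colourSet Δ Set.univ, c ≠ c1 := by
    obtain ⟨c, hc⟩ := (hΔ.diff (Set.finite_singleton c1)).nonempty
    exact ⟨c, hc.1, by simpa using hc.2⟩
  obtain ⟨c3, hc3, hc31, hc32⟩ : ∃ c ∈ colourSet Δ Set.univ, c ≠ c1 ∧ c ≠ c2 := by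
    obtain ⟨c, hc⟩ := (hΔ.diff (Set.Finite.insert c1 (Set.finite_singleton c2))).nonempty
    have := hc.2
    simp only [Set.mem_insert_iff, Set.mem_singleton_iff, not_or] at this
    exact ⟨c, hc.1, this.1, this.2⟩
  obtain ⟨x1, -, y1, -, hxy1, he1⟩ := hc1
  obtain ⟨x2, -, y2, -, hxy2, he2⟩ := hc2
  obtain ⟨x3, -, y3, -, hxy3, he3⟩ := hc3
  set X : Finset ℕ := {x1, y1, x2, y2, x3, y3} with hX
  have hsub : ({c1, c2, c3} : Set ℕ) ⊆ colourSet Δ ↑X := by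
    intro c hc
    simp only [Set.mem_insert_iff, Set.mem_singleton_iff] at hc
    rcases hc with rfl | rfl | rfl
    · exact ⟨x1, by simp [hX], y1, by simp [hX], hxy1, he1⟩
    · exact ⟨x2, by simp [hX], y2, by simp [hX], hxy2, he2⟩
    · exact ⟨x3, by simp [hX], y3, by simp [hX], hxy3, he3⟩
  have h3 : 3 ≤ (colourSet Δ ↑X).ncard := by
    have hcard : ({c1, c2, c3} : Set ℕ).ncard = 3 :=
      Set.ncard_eq_three.mpr ⟨c1, c2, c3, Ne.symm hc21, Ne.symm hc31, Ne.symm hc32, rfl⟩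
    calc 3 = ({c1, c2, c3} : Set ℕ).ncard := hcard.symm
      _ ≤ (colourSet Δ ↑X).ncard := Set.ncard_le_ncard hsub (colourSet_finite Δ X)
  obtain ⟨Y, hfin, hY⟩ := key Δ X.card X rfl h3
  exact ⟨by norm_num, Y, hfin, hY⟩
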